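/- arXiv:1502.06342 — 3 statements merged into one kernel-verified Lean document; each statement's English description precedes it below -/
import Mathlib

section
/- If g:[0,∞)→ℝ is absolutely continuous with g(0)=0, g' square integrable, and sup_{t≥0}|g(t)|/(1+t) ≥ 1, then (1/2)∫_0^∞ (g'(t))^2 dt ≥ 2. -/
open Set MeasureTheory intervalIntegral

/-- If `g` is absolutely continuous with `g(0)=0`, `g'` square integrable, and
`sup_{t≥0} |g(t)|/(1+t) ≥ 1`, then `(1/2)∫_0^∞ (g'(t))² dt ≥ 2`. -/
theorem schilder_lower_bound_on_B
    (g g' : ℝ → ℝ)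
    (hg0 : g 0 = 0)
    (hrep : ∀ t ≥ (0:ℝ), g t = ∫ s in (0:ℝ)..t, g' s)
    (hloc : ∀ T > (0:ℝ), IntervalIntegrable g' MeasureTheory.volume 0 T)
    (hL2 : MeasureTheory.Integrable (fun t => (g' t) ^ 2)
      (MeasureTheory.volume.restrict (Ioi (0:ℝ))))
    (hsup : (1 : ENNReal) ≤ ⨆ t : Ici (0:ℝ), ENNReal.ofReal (|g t| / (1 + (t:ℝ)))) :
    (2 : ℝ) ≤ 2⁻¹ * ∫ t in Ioi (0:ℝ), (g' t) ^ 2 := by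
  by_contra h
  push_neg at h
  set E := ∫ t in Ioi (0:ℝ), (g' t) ^ 2 with hE_def
  have hE0 : 0 ≤ E := setIntegral_nonneg measurableSet_Ioi (fun x _ => sq_nonneg _)
  have hE4 : E < 4 := by nlinarith
  set c : ℝ := (Real.sqrt E + 2) / 2 with hc_def
  have hsE0 : 0 ≤ Real.sqrt E := Real.sqrt_nonneg _
  have hsE : Real.sqrt E < 2 := by
    have h4 : Real.sqrt 4 = 2 := by
      rw [show (4:ℝ) = 2^2 by norm_num, Real.sqrt_sq (by norm_num)]
    calc Real.sqrt E < Real.sqrt 4 := Real.sqrt_lt_sqrt hE0 hE4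
      _ = 2 := h4
  have hc0 : 0 < c := by rw [hc_def]; linarith
  have hc2 : c < 2 := by rw [hc_def]; linarith
  have hEc : E < c ^ 2 := by
    have h1 : Real.sqrt E < c := by rw [hc_def]; linarith
    have h2 : Real.sqrt E ^ 2 = E := Real.sq_sqrt hE0
    nlinarith
  clear_value E c
  have key : ∀ t : ℝ, 0 ≤ t → |g t| ≤ (E + c ^ 2 * t) / (2 * c) := by
    intro t ht
    have hint2 : IntervalIntegrable (fun s => (g' s) ^ 2) volume 0 t := by
      rw [intervalIntegrable_iff, Set.uIoc_of_le ht]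
      exact MeasureTheory.IntegrableOn.mono_set hL2 Set.Ioc_subset_Ioi_self
    have hint1 : IntervalIntegrable (fun s => |g' s|) volume 0 t := by
      rcases eq_or_lt_of_le ht with rfl | ht'
      · exact IntervalIntegrable.refl
      · exact (hloc t ht').abs
    have h1 : |g t| ≤ ∫ s in (0:ℝ)..t, |g' s| := by
      rw [hrep t ht]
      exact intervalIntegral.abs_integral_le_integral_abs ht
    have h2 : (∫ s in (0:ℝ)..t, |g' s|)
        ≤ ∫ s in (0:ℝ)..t, ((g' s) ^ 2 + c ^ 2) / (2 * c) := by
      apply intervalIntegral.integral_mono_on ht hint1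
        ((hint2.add intervalIntegrable_const).div_const _)
      intro s _
      rw [le_div_iff₀ (by linarith)]
      nlinarith [sq_nonneg (|g' s| - c), sq_abs (g' s)]
    have h3 : (∫ s in (0:ℝ)..t, ((g' s) ^ 2 + c ^ 2) / (2 * c))
        = ((∫ s in (0:ℝ)..t, (g' s) ^ 2) + c ^ 2 * t) / (2 * c) := by
      rw [intervalIntegral.integral_div,
        intervalIntegral.integral_add hint2 intervalIntegrable_const,
        intervalIntegral.integral_const]
      simp only [smul_eq_mul, sub_zero]
      ring
    have h4 : (∫ s in (0:ℝ)..t, (g' s) ^ 2) ≤ E := by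
      rw [intervalIntegral.integral_of_le ht, hE_def]
      exact setIntegral_mono_set hL2 (Filter.Eventually.of_forall fun x => sq_nonneg _)
        (HasSubset.Subset.eventuallyLE Set.Ioc_subset_Ioi_self)
    calc |g t| ≤ ((∫ s in (0:ℝ)..t, (g' s) ^ 2) + c ^ 2 * t) / (2 * c) := by
          rw [← h3]; exact h1.trans h2
      _ ≤ (E + c ^ 2 * t) / (2 * c) := by gcongr
  have hbound : ∀ t : Ici (0:ℝ),
      ENNReal.ofReal (|g t| / (1 + (t:ℝ))) ≤ ENNReal.ofReal (c / 2) := by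
    rintro ⟨t, ht⟩
    apply ENNReal.ofReal_le_ofReal
    have h1t : (0:ℝ) < 1 + t := by simp at ht; linarith
    rw [div_le_iff₀ h1t]
    simp only [Set.mem_Ici] at ht
    calc |g t| ≤ (E + c ^ 2 * t) / (2 * c) := key t ht
      _ ≤ (c ^ 2 + c ^ 2 * t) / (2 * c) := by gcongr
      _ = c / 2 * (1 + t) := by field_simp
  have hfin : (1 : ENNReal) ≤ ENNReal.ofReal (c / 2) :=
    le_trans hsup (iSup_le hbound)
  rw [ENNReal.one_le_ofReal] at hfin
  linarith
end

section
/- The function f(t) = 2t for 0 ≤ t ≤ 1 and f(t) = 2 for t ≥ 1 satisfies f(0)=0, sup_{t≥0}|f(t)|/(1+t) = 1, and (1/2)∫_0^∞ (f'(t))² dt = 2. Hence the infimum of (1/2)∫_0^∞ (g')² over absolutely continuous g with g(0)=0 and sup_{t≥0}|g(t)|/(1+t) ≥ 1 equals 2. -/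
open Set MeasureTheory

/-- The function `f(t) = 2t` on `[0,1]`, `= 2` for `t ≥ 1` has `f(0)=0`,
`sup_{t≥0}|f(t)|/(1+t) = 1` and energy `(1/2)∫_0^∞ (f')² = 2`; moreover the infimum of
`(1/2)∫_0^∞(g')²` over absolutely continuous `g` with `g(0)=0`, `g' ∈ L²` and
`sup_{t≥0}|g(t)|/(1+t) ≥ 1` equals `2`. -/
theorem schilder_infimum_eq_two
    (f f' : ℝ → ℝ)
    (hf : ∀ t, f t = if t ≤ 1 then 2 * t else 2)
    (hf' : ∀ t, f' t = if t < 1 then 2 else 0) :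
    f 0 = 0 ∧
    (⨆ t : Ici (0:ℝ), |f t| / (1 + (t:ℝ))) = 1 ∧
    2⁻¹ * (∫ t in Ioi (0:ℝ), (f' t) ^ 2) = 2 ∧
    sInf {y : ℝ | ∃ g g' : ℝ → ℝ,
        g 0 = 0 ∧
        (∀ t ≥ (0:ℝ), g t = ∫ s in (0:ℝ)..t, g' s) ∧
        (∀ T > (0:ℝ), IntervalIntegrable g' MeasureTheory.volume 0 T) ∧
        MeasureTheory.Integrable (fun t => (g' t) ^ 2)
          (MeasureTheory.volume.restrict (Ioi (0:ℝ))) ∧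
        (1 : ENNReal) ≤ (⨆ t : Ici (0:ℝ), ENNReal.ofReal (|g t| / (1 + (t:ℝ)))) ∧
        y = 2⁻¹ * ∫ t in Ioi (0:ℝ), (g' t) ^ 2} = 2 := by
  have hf'sq : (fun t => (f' t)^2) = (Iio (1:ℝ)).indicator (fun _ => (4:ℝ)) := by
    funext t
    by_cases h : t < 1 <;> simp [hf', h, indicator] <;> norm_num
  have h1 : f 0 = 0 := by simp [hf]
  have hint3 : (∫ t in Ioi (0:ℝ), (f' t)^2) = 4 := by
    rw [hf'sq, setIntegral_indicator measurableSet_Iio]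
    have : Ioi (0:ℝ) ∩ Iio 1 = Ioo 0 1 := by ext x; simp [mem_Ioo, and_comm]
    rw [this]
    simp [Real.volume_Ioo]
  have hbound : ∀ t : Ici (0:ℝ), |f t| / (1 + (t:ℝ)) ≤ 1 := by
    rintro ⟨t, ht⟩
    simp only [hf]
    have ht0 : (0:ℝ) ≤ t := ht
    have h0 : (0:ℝ) < 1 + t := by linarith
    rw [div_le_one h0]
    split_ifs with h
    · rw [abs_of_nonneg (by linarith)]; linarith
    · rw [abs_of_nonneg (by norm_num)]; linarith
  have h2 : (⨆ t : Ici (0:ℝ), |f t| / (1 + (t:ℝ))) = 1 := by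
    apply le_antisymm (ciSup_le hbound)
    have hle := le_ciSup (f := fun t : Ici (0:ℝ) => |f (t:ℝ)| / (1 + (t:ℝ)))
      ⟨1, by rintro x ⟨t, rfl⟩; exact hbound t⟩ (⟨1, by norm_num⟩ : Ici (0:ℝ))
    calc (1:ℝ) = |f ((⟨1, by norm_num⟩ : Ici (0:ℝ)) : ℝ)| / (1 + ((⟨1, by norm_num⟩ : Ici (0:ℝ)) : ℝ)) := by
          norm_num [hf]
      _ ≤ _ := hle
  -- intervalIntegrable f'
  have hf'int : ∀ a b : ℝ, IntervalIntegrable f' volume a b := by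
    intro a b
    have hind : f' = (Iio (1:ℝ)).indicator (fun _ => (2:ℝ)) := by
      funext t; by_cases h : t < 1 <;> simp [hf', h, indicator]
    rw [hind, intervalIntegrable_iff]
    exact ((integrableOn_const_iff (C := (2:ℝ)) (by simp)).mpr (Or.inr measure_Ioc_lt_top)).indicator measurableSet_Iio
  have key1 : ∀ t : ℝ, 0 ≤ t → t ≤ 1 → (∫ s in (0:ℝ)..t, f' s) = 2 * t := by
    intro t h0 ht1
    have hne : ∀ᵐ x : ℝ ∂volume, x ≠ 1 := by
      rw [ae_iff]; simpa using measure_singleton (1:ℝ)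
    have hcg : ∫ s in (0:ℝ)..t, f' s = ∫ s in (0:ℝ)..t, (2:ℝ) := by
      apply intervalIntegral.integral_congr_ae
      filter_upwards [hne] with x hx hmem
      rw [uIoc_of_le h0] at hmem
      have : x < 1 := lt_of_le_of_ne (hmem.2.trans ht1) hx
      simp [hf', this]
    rw [hcg, intervalIntegral.integral_const]
    simp [mul_comm]
  have key2 : ∀ t : ℝ, 1 < t → (∫ s in (0:ℝ)..t, f' s) = 2 := by
    intro t ht
    rw [← intervalIntegral.integral_add_adjacent_intervals (hf'int 0 1) (hf'int 1 t)]
    have hz : (∫ s in (1:ℝ)..t, f' s) = 0 := by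
      rw [intervalIntegral.integral_congr (g := fun _ => (0:ℝ))]
      · simp
      · intro x hx
        rw [uIcc_of_le ht.le] at hx
        simp [hf', not_lt.mpr hx.1]
    rw [key1 1 zero_le_one le_rfl, hz]; norm_num
  -- membership of 2 in the set
  have hmem : (2:ℝ) ∈ {y : ℝ | ∃ g g' : ℝ → ℝ,
        g 0 = 0 ∧
        (∀ t ≥ (0:ℝ), g t = ∫ s in (0:ℝ)..t, g' s) ∧
        (∀ T > (0:ℝ), IntervalIntegrable g' MeasureTheory.volume 0 T) ∧
        MeasureTheory.Integrable (fun t => (g' t) ^ 2)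
          (MeasureTheory.volume.restrict (Ioi (0:ℝ))) ∧
        (1 : ENNReal) ≤ (⨆ t : Ici (0:ℝ), ENNReal.ofReal (|g t| / (1 + (t:ℝ)))) ∧
        y = 2⁻¹ * ∫ t in Ioi (0:ℝ), (g' t) ^ 2} := by
    refine ⟨f, f', h1, ?_, fun T _ => hf'int 0 T, ?_, ?_, by rw [hint3]; norm_num⟩
    · intro t ht
      by_cases h : t ≤ 1
      · rw [hf, if_pos h, key1 t ht h]
      · push_neg at h
        rw [hf, if_neg (not_le.mpr h), key2 t h]
    · rw [hf'sq, integrable_indicator_iff measurableSet_Iio]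
      refine (integrableOn_const_iff (C := (4:ℝ)) (by simp)).mpr (Or.inr ?_)
      rw [Measure.restrict_apply measurableSet_Iio]
      have : Iio (1:ℝ) ∩ Ioi 0 = Ioo 0 1 := by ext x; simp [mem_Ioo, and_comm]
      rw [this, Real.volume_Ioo]
      norm_num
    · have hval : ENNReal.ofReal (|f ((⟨1, by norm_num⟩ : Ici (0:ℝ)) : ℝ)| / (1 + ((⟨1, by norm_num⟩ : Ici (0:ℝ)) : ℝ))) = 1 := by
        norm_num [hf]
      calc (1:ENNReal) = _ := hval.symm
        _ ≤ _ := le_iSup (fun t : Ici (0:ℝ) => ENNReal.ofReal (|f (t:ℝ)| / (1 + (t:ℝ)))) ⟨1, by norm_num⟩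
  -- lower bound
  have hlb : ∀ y ∈ {y : ℝ | ∃ g g' : ℝ → ℝ,
        g 0 = 0 ∧
        (∀ t ≥ (0:ℝ), g t = ∫ s in (0:ℝ)..t, g' s) ∧
        (∀ T > (0:ℝ), IntervalIntegrable g' MeasureTheory.volume 0 T) ∧
        MeasureTheory.Integrable (fun t => (g' t) ^ 2)
          (MeasureTheory.volume.restrict (Ioi (0:ℝ))) ∧
        (1 : ENNReal) ≤ (⨆ t : Ici (0:ℝ), ENNReal.ofReal (|g t| / (1 + (t:ℝ)))) ∧
        y = 2⁻¹ * ∫ t in Ioi (0:ℝ), (g' t) ^ 2}, 2 ≤ y := by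
    rintro y ⟨g, g', hg0, hgAC, hgi, hgsq, hgsup, rfl⟩
    set E := ∫ t in Ioi (0:ℝ), (g' t) ^ 2 with hEdef
    have hE0 : 0 ≤ E := setIntegral_nonneg measurableSet_Ioi (fun x _ => sq_nonneg _)
    have key : ∀ c : ℝ, 0 < c → c < 1 → 4 * c^2 ≤ E := by
      intro c hc0 hc1
      obtain ⟨t, htc⟩ : ∃ t : Ici (0:ℝ), ENNReal.ofReal c < ENNReal.ofReal (|g (t:ℝ)| / (1 + (t:ℝ))) := by
        refine lt_iSup_iff.mp (lt_of_lt_of_le ?_ hgsup)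
        exact ENNReal.ofReal_lt_one.mpr hc1
      have hc' : c < |g (t:ℝ)| / (1 + (t:ℝ)) := by
        by_contra h
        push_neg at h
        exact absurd (ENNReal.ofReal_le_ofReal h) (not_le.mpr htc)
      obtain ⟨τ, hτ0⟩ := t
      simp only at hc'
      have hτ0' : (0:ℝ) ≤ τ := hτ0
      have hτpos : 0 < τ := by
        rcases eq_or_lt_of_le hτ0' with h | h
        · exfalso
          rw [← h] at hc'
          simp [hg0] at hc'
          linarith
        · exact h
      have h1τ : (0:ℝ) < 1 + τ := by linarith
      have hgt : c * (1 + τ) < |g τ| := (lt_div_iff₀ h1τ).mp hc'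
      set a := c * (1 + τ) / τ with ha
      have ha0 : 0 < a := by positivity
      have hg2Ioi : IntegrableOn (fun s => (g' s)^2) (Ioi 0) volume := hgsq
      have hg2Ioc : IntegrableOn (fun s => (g' s)^2) (Ioc 0 τ) volume :=
        hg2Ioi.mono_set Ioc_subset_Ioi_self
      have hg2ii : IntervalIntegrable (fun s => (g' s)^2) volume 0 τ :=
        (intervalIntegrable_iff_integrableOn_Ioc_of_le hτpos.le).mpr hg2Ioc
      have habs : IntervalIntegrable (fun s => |g' s|) volume 0 τ := (hgi τ hτpos).abs
      have step1 : |g τ| ≤ ∫ s in (0:ℝ)..τ, |g' s| := by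
        rw [hgAC τ hτ0']
        exact intervalIntegral.abs_integral_le_integral_abs hτpos.le
      have hii2 : IntervalIntegrable (fun s => ((g' s)^2 + a^2) / (2*a)) volume 0 τ :=
        (hg2ii.add intervalIntegrable_const).div_const (2*a)
      have step2 : (∫ s in (0:ℝ)..τ, |g' s|) ≤ ∫ s in (0:ℝ)..τ, ((g' s)^2 + a^2) / (2*a) := by
        apply intervalIntegral.integral_mono_on hτpos.le habs hii2
        intro x _
        rw [le_div_iff₀ (by positivity)]
        nlinarith [sq_nonneg (|g' x| - a), sq_abs (g' x)]
      have step3 : (∫ s in (0:ℝ)..τ, ((g' s)^2 + a^2) / (2*a))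
          = ((∫ s in (0:ℝ)..τ, (g' s)^2) + a^2 * τ) / (2*a) := by
        rw [intervalIntegral.integral_div, intervalIntegral.integral_add hg2ii intervalIntegrable_const,
          intervalIntegral.integral_const]
        simp
        ring
      have step4 : (∫ s in (0:ℝ)..τ, (g' s)^2) ≤ E := by
        rw [intervalIntegral.integral_of_le hτpos.le]
        exact setIntegral_mono_set hg2Ioi (ae_of_all _ fun x => sq_nonneg _)
          (HasSubset.Subset.eventuallyLE Ioc_subset_Ioi_self)
      have hchain : c * (1 + τ) ≤ (E + a^2 * τ) / (2*a) := by
        refine le_trans (le_trans hgt.le (step1.trans (step2.trans_eq step3))) ?_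
        gcongr
      have hcomb : c * (1 + τ) * (2*a) ≤ E + a^2 * τ := (le_div_iff₀ (by positivity)).mp hchain
      have hD : c^2 * (1+τ)^2 / τ ≤ E := by
        rw [ha] at hcomb
        have e1 : c * (1 + τ) * (2 * (c * (1 + τ) / τ)) = 2 * (c^2 * (1+τ)^2 / τ) := by
          field_simp
        have e2 : (c * (1 + τ) / τ)^2 * τ = c^2 * (1+τ)^2 / τ := by
          field_simp
        rw [e1, e2] at hcomb
        linarith
      have hAM : 4 * c^2 ≤ c^2 * (1+τ)^2 / τ := by
        rw [le_div_iff₀ hτpos]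
        nlinarith [sq_nonneg (c * (1 - τ))]
      linarith
    have h4E : 4 ≤ E := by
      by_contra h
      push_neg at h
      set c := (Real.sqrt E + 2) / 4 with hcdef
      have hs0 : 0 ≤ Real.sqrt E := Real.sqrt_nonneg E
      have hs2 : Real.sqrt E < 2 := by
        have h4 : Real.sqrt E < Real.sqrt 4 := Real.sqrt_lt_sqrt hE0 h
        have : Real.sqrt 4 = 2 := by
          rw [show (4:ℝ) = 2^2 by norm_num, Real.sqrt_sq (by norm_num)]
        linarith [this ▸ h4]
      have hc0 : 0 < c := by rw [hcdef]; positivity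
      have hc1 : c < 1 := by rw [hcdef]; linarith
      have hkey := key c hc0 hc1
      have hss : Real.sqrt E ^ 2 = E := Real.sq_sqrt hE0
      nlinarith [hkey, hss, hs0, hs2]
    linarith
  refine ⟨h1, h2, by rw [hint3]; norm_num, ?_⟩
  exact le_antisymm (csInf_le ⟨2, hlb⟩ hmem) (le_csInf ⟨2, hmem⟩ hlb)
end

section
/- Suppose a nonnegative function Λ:ℝ→[0,∞] satisfies Λ(α) ≥ h(|α|)·|α| for all α, where h is nondecreasing, continuous, h(t) = δt for 0 ≤ t ≤ 1 with δ > 0, and h(t) → ∞. If f:[0,T]→ℝ is absolutely continuous with f(0)=0 and ∫_0^T Λ(f'(t)) dt ≤ r, then for all T ≥ r/δ, |f(T)| ≤ √(r/δ)·√T. -/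
open Set MeasureTheory

/-- If the convex nonnegative deviation function `Λ` satisfies `Λ(α) ≥ h(|α|)|α|`
with `h` nondecreasing, continuous, `h(t)=δt` on `[0,1]`, `h → ∞`, and `f` is
absolutely continuous on `[0,T]` with `f(0)=0` and `∫_0^T Λ(f') ≤ r`, then for
`T ≥ r/δ` one has `|f(T)| ≤ √(r/δ)·√T`. -/
theorem rate_bound_gives_endpoint_growth
    (Λ : ℝ → ℝ) (hΛ0 : ∀ α, 0 ≤ Λ α) (hΛconv : ConvexOn ℝ Set.univ Λ)
    (h : ℝ → ℝ) (δ : ℝ) (hδ : 0 < δ)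
    (hmono : Monotone h) (hcont : Continuous h)
    (hlin : ∀ t ∈ Icc (0:ℝ) 1, h t = δ * t)
    (hinfty : Filter.Tendsto h Filter.atTop Filter.atTop)
    (hΛh : ∀ α : ℝ, h |α| * |α| ≤ Λ α)
    (r : ℝ) (hr : 0 < r)
    (T : ℝ) (hT : r / δ ≤ T) (hTpos : 0 < T)
    (f f' : ℝ → ℝ) (hf0 : f 0 = 0)
    (hrep : ∀ t ∈ Icc (0:ℝ) T, f t = ∫ s in (0:ℝ)..t, f' s)
    (hint : IntervalIntegrable f' MeasureTheory.volume 0 T)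
    (hrate : ∫⁻ t in Ioc (0:ℝ) T, ENNReal.ofReal (Λ (f' t)) ≤ ENNReal.ofReal r) :
    |f T| ≤ Real.sqrt (r / δ) * Real.sqrt T := by
  set μ : Measure ℝ := volume.restrict (Ioc 0 T) with hμ
  have hμuniv : μ univ = ENNReal.ofReal T := by
    simp [hμ, Real.volume_Ioc]
  haveI : IsFiniteMeasure μ := ⟨by rw [hμuniv]; exact ENNReal.ofReal_lt_top⟩
  haveI : NeZero μ := ⟨by
    intro h0
    rw [h0] at hμuniv
    simp only [Measure.coe_zero, Pi.zero_apply] at hμuniv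
    exact absurd hμuniv.symm (by simp [ENNReal.ofReal_eq_zero, not_le, hTpos])⟩
  have hfi : Integrable f' μ :=
    (intervalIntegrable_iff_integrableOn_Ioc_of_le hTpos.le).mp hint
  have hΛm : AEStronglyMeasurable (fun t => Λ (f' t)) μ := by
    have : ContinuousOn Λ univ := hΛconv.continuousOn isOpen_univ
    exact ((continuousOn_univ.mp this).comp_aestronglyMeasurable
      hfi.aestronglyMeasurable)
  have hΛfi : Integrable (Λ ∘ f') μ := by
    refine ⟨hΛm, ?_⟩
    rw [HasFiniteIntegral]
    calc ∫⁻ t, ‖Λ (f' t)‖₊ ∂μ = ∫⁻ t, ENNReal.ofReal (Λ (f' t)) ∂μ := by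
          refine lintegral_congr fun t => ?_
          exact Real.enorm_eq_ofReal (hΛ0 _)
      _ ≤ ENNReal.ofReal r := hrate
      _ < ⊤ := ENNReal.ofReal_lt_top
  -- Jensen
  have jensen := hΛconv.map_average_le (hΛconv.continuousOn isOpen_univ) isClosed_univ
    (Filter.Eventually.of_forall fun _ => mem_univ _) hfi hΛfi
  have havg_eq : ⨍ x, f' x ∂μ = f T / T := by
    rw [average_eq, measureReal_def, hμuniv, ENNReal.toReal_ofReal hTpos.le]
    have : ∫ x, f' x ∂μ = f T := by
      rw [hrep T (by constructor <;> linarith), intervalIntegral.integral_of_le hTpos.le]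
    rw [this, smul_eq_mul, inv_mul_eq_div]
  have hintΛ : ∫ x, Λ (f' x) ∂μ ≤ r := by
    rw [integral_eq_lintegral_of_nonneg_ae (Filter.Eventually.of_forall fun t => hΛ0 _) hΛm]
    exact ENNReal.toReal_le_of_le_ofReal hr.le hrate
  have havgΛ : ⨍ x, Λ (f' x) ∂μ ≤ r / T := by
    rw [average_eq, measureReal_def, hμuniv, ENNReal.toReal_ofReal hTpos.le, smul_eq_mul]
    rw [div_eq_inv_mul]
    exact mul_le_mul_of_nonneg_left hintΛ (by positivity)
  rw [havg_eq] at jensen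
  have key : Λ (f T / T) ≤ r / T := le_trans jensen havgΛ
  -- algebra
  by_contra hcon
  push_neg at hcon
  set B := Real.sqrt (r / δ) * Real.sqrt T with hB
  set c := B / T with hc
  have hBpos : 0 < B := by positivity
  have hcpos : 0 < c := div_pos hBpos hTpos
  have hc1 : c ≤ 1 := by
    rw [hc, div_le_one hTpos, hB]
    calc Real.sqrt (r / δ) * Real.sqrt T ≤ Real.sqrt T * Real.sqrt T := by
          apply mul_le_mul_of_nonneg_right _ (Real.sqrt_nonneg _)
          exact Real.sqrt_le_sqrt hT
      _ = T := Real.mul_self_sqrt hTpos.le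
  have hc2 : δ * (c * c) = r / T := by
    have : c * c = (r / δ) / T := by
      rw [hc, hB, div_mul_div_comm,
        show Real.sqrt (r/δ)*Real.sqrt T*(Real.sqrt (r/δ)*Real.sqrt T)
          = (Real.sqrt (r/δ)*Real.sqrt (r/δ))*(Real.sqrt T*Real.sqrt T) by ring,
        Real.mul_self_sqrt (by positivity), Real.mul_self_sqrt hTpos.le]
      rw [mul_div_assoc, show T / (T * T) = 1 / T by
        field_simp]
      rw [mul_one_div, div_div]
    rw [this]
    field_simp
  set a := |f T / T| with ha
  have haA : a = |f T| / T := by rw [ha, abs_div, abs_of_pos hTpos]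
  have hac : c < a := by
    rw [haA, hc, div_lt_div_iff₀ hTpos hTpos]
    nlinarith
  set m := min a 1 with hm
  have hm0 : 0 ≤ m := le_min (abs_nonneg _) zero_le_one
  have hmc : c ≤ m := le_min hac.le hc1
  have hhm : h m = δ * m := hlin m ⟨hm0, min_le_right _ _⟩
  have hham : h m ≤ h a := hmono (min_le_left _ _)
  have hma : δ * (c * c) < δ * (m * a) := by
    apply mul_lt_mul_of_pos_left _ hδ
    calc c * c < c * a := mul_lt_mul_of_pos_left hac hcpos
      _ ≤ m * a := mul_le_mul_of_nonneg_right hmc (le_trans hcpos.le hac.le)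
  have : r / T < Λ (f T / T) := by
    calc r / T = δ * (c * c) := hc2.symm
      _ < δ * (m * a) := hma
      _ = (δ * m) * a := by ring
      _ = h m * a := by rw [hhm]
      _ ≤ h a * a := mul_le_mul_of_nonneg_right hham (abs_nonneg _)
      _ ≤ Λ (f T / T) := hΛh _
  linarith
end
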